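/- Let b ∈ (0,1). Suppose σ, μ : (−π/2, π/2) × ℝ → ℝ are twice continuously differentiable and satisfy, at every point (θ,x), the system ∂σ/∂θ + b cos θ ∂μ/∂θ + b sin θ · μ = 0 and ∂σ/∂x + b cos θ ∂μ/∂x = 0. Then ∂μ/∂x ≡ 0 and ∂σ/∂x ≡ 0 on (−π/2, π/2) × ℝ; in particular σ and μ depend only on θ. -/

import Mathlib

/-!
Statement 3: the λ-equations for the inverted pendulum cart force `σ` and `μ`
to be independent of `x` on the strip `(−π/2, π/2) × ℝ`.
-/

noncomputable section

open Real Set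

/-- Partial derivative in the `θ` (first) direction. -/
def pdth (f : ℝ × ℝ → ℝ) (p : ℝ × ℝ) : ℝ := fderiv ℝ f p (1, 0)

/-- Partial derivative in the `x` (second) direction. -/
def pdx (f : ℝ × ℝ → ℝ) (p : ℝ × ℝ) : ℝ := fderiv ℝ f p (0, 1)

/-- The strip `(−π/2, π/2) × ℝ`. -/
def strip : Set (ℝ × ℝ) := Ioo (-(π / 2)) (π / 2) ×ˢ (univ : Set ℝ)

lemma strip_open : IsOpen strip := isOpen_Ioo.prod isOpen_univ

/-- Derivative of the directional derivative, for a `C²` function. -/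
lemma hasFDerivAt_dirDeriv (f : ℝ × ℝ → ℝ) (p : ℝ × ℝ) (hf : ContDiffAt ℝ 2 f p) (v : ℝ × ℝ) :
    HasFDerivAt (fun q => fderiv ℝ f q v)
      ((ContinuousLinearMap.apply ℝ ℝ v).comp (fderiv ℝ (fderiv ℝ f) p)) p := by
  have h1 : ContDiffAt ℝ 1 (fderiv ℝ f) p := hf.fderiv_right (by norm_num)
  have h2 : HasFDerivAt (fderiv ℝ f) (fderiv ℝ (fderiv ℝ f) p) p :=
    (h1.differentiableAt (by norm_num)).hasFDerivAt
  exact (ContinuousLinearMap.apply ℝ ℝ v).hasFDerivAt.comp p h2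

/-- If a function vanishes on an open set, its fderiv vanishes there. -/
lemma fderiv_zero_of_zero_on_open {f : ℝ × ℝ → ℝ} {s : Set (ℝ × ℝ)} (hs : IsOpen s)
    {p : ℝ × ℝ} (hp : p ∈ s) (h : ∀ q ∈ s, f q = 0) : fderiv ℝ f p = 0 := by
  have heq : f =ᶠ[nhds p] (fun _ => (0 : ℝ)) := by
    filter_upwards [hs.mem_nhds hp] with q hq using h q hq
  rw [heq.fderiv_eq, fderiv_fun_const]
  rfl

theorem statement3 (b : ℝ) (hb : b ∈ Ioo (0 : ℝ) 1)
    (σ μ : ℝ × ℝ → ℝ)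
    (hσ : ContDiffOn ℝ 2 σ strip) (hμ : ContDiffOn ℝ 2 μ strip)
    (heq1 : ∀ p ∈ strip,
      pdth σ p + b * Real.cos p.1 * pdth μ p + b * Real.sin p.1 * μ p = 0)
    (heq2 : ∀ p ∈ strip,
      pdx σ p + b * Real.cos p.1 * pdx μ p = 0) :
    (∀ p ∈ strip, pdx μ p = 0) ∧ (∀ p ∈ strip, pdx σ p = 0) ∧
      (∀ p ∈ strip, ∀ q ∈ strip, p.1 = q.1 → σ p = σ q ∧ μ p = μ q) := by
  have hbne : b ≠ 0 := ne_of_gt hb.1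
  -- key pointwise identity: sin θ * μ_x = 0
  have key : ∀ p ∈ strip, Real.sin p.1 * pdx μ p = 0 := by
    intro p hp
    have hσAt : ContDiffAt ℝ 2 σ p := hσ.contDiffAt (strip_open.mem_nhds hp)
    have hμAt : ContDiffAt ℝ 2 μ p := hμ.contDiffAt (strip_open.mem_nhds hp)
    have hσsymm := hσAt.isSymmSndFDerivAt (by simp)
    have hμsymm := hμAt.isSymmSndFDerivAt (by simp)
    -- derivatives of the coefficient functions
    have hcos : HasFDerivAt (fun q : ℝ × ℝ => b * Real.cos q.1)
        (b • ((-Real.sin p.1) • (ContinuousLinearMap.fst ℝ ℝ ℝ))) p := by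
      exact (((Real.hasDerivAt_cos p.1).comp_hasFDerivAt p hasFDerivAt_fst).const_mul b)
    have hsin : HasFDerivAt (fun q : ℝ × ℝ => b * Real.sin q.1)
        (b • ((Real.cos p.1) • (ContinuousLinearMap.fst ℝ ℝ ℝ))) p := by
      exact (((Real.hasDerivAt_sin p.1).comp_hasFDerivAt p hasFDerivAt_fst).const_mul b)
    have hμf : HasFDerivAt μ (fderiv ℝ μ p) p :=
      (hμAt.differentiableAt (by norm_num)).hasFDerivAt
    -- the function from equation 2 vanishes on the strip; differentiate it
    have hG : HasFDerivAt
        (fun q => fderiv ℝ σ q (0,1) + b * Real.cos q.1 * fderiv ℝ μ q (0,1))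
        ((ContinuousLinearMap.apply ℝ ℝ ((0:ℝ),(1:ℝ))).comp (fderiv ℝ (fderiv ℝ σ) p)
          + ((b * Real.cos p.1) •
              ((ContinuousLinearMap.apply ℝ ℝ ((0:ℝ),(1:ℝ))).comp (fderiv ℝ (fderiv ℝ μ) p))
            + (fderiv ℝ μ p (0,1)) • (b • ((-Real.sin p.1) • (ContinuousLinearMap.fst ℝ ℝ ℝ))))) p :=
      (hasFDerivAt_dirDeriv σ p hσAt (0,1)).add
        (hcos.mul (hasFDerivAt_dirDeriv μ p hμAt (0,1)))
    have hGzero : fderiv ℝ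
        (fun q => fderiv ℝ σ q (0,1) + b * Real.cos q.1 * fderiv ℝ μ q (0,1)) p = 0 := by
      apply fderiv_zero_of_zero_on_open strip_open hp
      intro q hq
      exact heq2 q hq
    have eqI : fderiv ℝ (fderiv ℝ σ) p (1,0) (0,1)
        + (b * Real.cos p.1 * fderiv ℝ (fderiv ℝ μ) p (1,0) (0,1)
          + fderiv ℝ μ p (0,1) * (b * (-Real.sin p.1 * 1))) = 0 := by
      have := congrFun (congrArg DFunLike.coe (hG.fderiv.symm.trans hGzero)) ((1:ℝ),(0:ℝ))
      simpa [ContinuousLinearMap.add_apply, ContinuousLinearMap.smul_apply,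
        ContinuousLinearMap.comp_apply, ContinuousLinearMap.apply_apply,
        smul_eq_mul] using this
    -- the function from equation 1 vanishes on the strip; differentiate it
    have hH : HasFDerivAt
        (fun q => fderiv ℝ σ q (1,0) + b * Real.cos q.1 * fderiv ℝ μ q (1,0)
          + b * Real.sin q.1 * μ q)
        ((ContinuousLinearMap.apply ℝ ℝ ((1:ℝ),(0:ℝ))).comp (fderiv ℝ (fderiv ℝ σ) p)
          + ((b * Real.cos p.1) •
              ((ContinuousLinearMap.apply ℝ ℝ ((1:ℝ),(0:ℝ))).comp (fderiv ℝ (fderiv ℝ μ) p))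
            + (fderiv ℝ μ p (1,0)) • (b • ((-Real.sin p.1) • (ContinuousLinearMap.fst ℝ ℝ ℝ))))
          + ((b * Real.sin p.1) • (fderiv ℝ μ p)
            + (μ p) • (b • ((Real.cos p.1) • (ContinuousLinearMap.fst ℝ ℝ ℝ))))) p :=
      ((hasFDerivAt_dirDeriv σ p hσAt (1,0)).add
        (hcos.mul (hasFDerivAt_dirDeriv μ p hμAt (1,0)))).add (hsin.mul hμf)
    have hHzero : fderiv ℝ
        (fun q => fderiv ℝ σ q (1,0) + b * Real.cos q.1 * fderiv ℝ μ q (1,0)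
          + b * Real.sin q.1 * μ q) p = 0 := by
      apply fderiv_zero_of_zero_on_open strip_open hp
      intro q hq
      exact heq1 q hq
    have eqII : fderiv ℝ (fderiv ℝ σ) p (0,1) (1,0)
        + (b * Real.cos p.1 * fderiv ℝ (fderiv ℝ μ) p (0,1) (1,0)
          + fderiv ℝ μ p (1,0) * (b * (-Real.sin p.1 * 0)))
        + (b * Real.sin p.1 * fderiv ℝ μ p (0,1) + μ p * (b * (Real.cos p.1 * 0))) = 0 := by
      have := congrFun (congrArg DFunLike.coe (hH.fderiv.symm.trans hHzero)) ((0:ℝ),(1:ℝ))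
      simpa [ContinuousLinearMap.add_apply, ContinuousLinearMap.smul_apply,
        ContinuousLinearMap.comp_apply, ContinuousLinearMap.apply_apply,
        smul_eq_mul] using this
    -- use symmetry of second derivatives
    have hs1 : fderiv ℝ (fderiv ℝ σ) p (0,1) (1,0) = fderiv ℝ (fderiv ℝ σ) p (1,0) (0,1) :=
      hσsymm (0,1) (1,0)
    have hs2 : fderiv ℝ (fderiv ℝ μ) p (0,1) (1,0) = fderiv ℝ (fderiv ℝ μ) p (1,0) (0,1) :=
      hμsymm (0,1) (1,0)
    rw [hs1, hs2] at eqII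
    have : 2 * b * (Real.sin p.1 * fderiv ℝ μ p (0,1)) = 0 := by nlinarith [eqI, eqII]
    have h2b : (2 : ℝ) * b ≠ 0 := by positivity
    have := mul_eq_zero.mp this
    rcases this with h | h
    · exact absurd h h2b
    · simpa [pdx] using h
  -- continuity of `pdx μ` on the strip
  have hcont : ContinuousOn (pdx μ) strip := by
    have h1 : ContinuousOn (fderiv ℝ μ) strip :=
      hμ.continuousOn_fderiv_of_isOpen strip_open (by norm_num)
    exact (ContinuousLinearMap.apply ℝ ℝ ((0:ℝ),(1:ℝ))).continuous.comp_continuousOn h1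
  -- part 1 : μ_x = 0
  have part1 : ∀ p ∈ strip, pdx μ p = 0 := by
    intro p hp
    rcases eq_or_ne p.1 0 with h0 | h0
    · -- limit argument along θ → 0⁺
      have hcA : ContinuousAt (pdx μ) p :=
        hcont.continuousAt (strip_open.mem_nhds hp)
      have hp0 : ((0 : ℝ), p.2) = p := by rw [← h0]
      have hline : ContinuousAt (fun t : ℝ => pdx μ (t, p.2)) 0 := by
        have hc : ContinuousAt (fun t : ℝ => ((t, p.2) : ℝ × ℝ)) 0 :=
          (continuous_id.prodMk continuous_const).continuousAt
        rw [← hp0] at hcA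
        exact ContinuousAt.comp (x := (0:ℝ)) (f := fun t : ℝ => ((t, p.2) : ℝ × ℝ)) hcA hc
      have hne : (nhdsWithin (0:ℝ) (Ioo 0 (π/2))).NeBot := by
        rw [← mem_closure_iff_nhdsWithin_neBot]
        rw [closure_Ioo (by positivity : (0:ℝ) ≠ π/2)]
        exact ⟨le_refl 0, by positivity⟩
      have hlim1 : Filter.Tendsto (fun t : ℝ => pdx μ (t, p.2)) (nhdsWithin 0 (Ioo 0 (π/2)))
          (nhds (pdx μ (0, p.2))) := hline.continuousWithinAt
      have hlim2 : Filter.Tendsto (fun t : ℝ => pdx μ (t, p.2)) (nhdsWithin 0 (Ioo 0 (π/2)))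
          (nhds 0) := by
        apply Filter.Tendsto.congr' _ tendsto_const_nhds
        filter_upwards [self_mem_nhdsWithin] with t ht
        have htin : ((t, p.2) : ℝ × ℝ) ∈ strip := by
          refine ⟨⟨?_, ht.2⟩, trivial⟩
          linarith [ht.1, pi_pos]
        have hts : Real.sin t ≠ 0 := by
          refine ne_of_gt (Real.sin_pos_of_pos_of_lt_pi ht.1 ?_)
          linarith [ht.2, pi_pos]
        have := key _ htin
        exact (mul_eq_zero.mp this).resolve_left hts |>.symm
      have := tendsto_nhds_unique hlim1 hlim2
      rwa [hp0] at this
    · have hts : Real.sin p.1 ≠ 0 := by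
        intro hcontra
        apply h0
        have h1 : -π < p.1 := by
          have := hp.1.1; linarith [pi_pos]
        have h2 : p.1 < π := by
          have := hp.1.2; linarith [pi_pos]
        exact (Real.sin_eq_zero_iff_of_lt_of_lt h1 h2).mp hcontra
      exact (mul_eq_zero.mp (key p hp)).resolve_left hts
  -- part 2 : σ_x = 0
  have part2 : ∀ p ∈ strip, pdx σ p = 0 := by
    intro p hp
    have := heq2 p hp
    rw [part1 p hp] at this
    linarith
  refine ⟨part1, part2, ?_⟩
  -- part 3 : constancy in x
  intro p hp q hq hpq
  have hconst : ∀ f : ℝ × ℝ → ℝ, ContDiffOn ℝ 2 f strip → (∀ r ∈ strip, pdx f r = 0) →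
      f p = f q := by
    intro f hf hfx
    have hline : ∀ x : ℝ, HasDerivAt (fun x : ℝ => f (p.1, x)) 0 x := by
      intro x
      have hmem : ((p.1, x) : ℝ × ℝ) ∈ strip := ⟨hp.1, trivial⟩
      have hfd : HasFDerivAt f (fderiv ℝ f (p.1, x)) (p.1, x) :=
        ((hf.contDiffAt (strip_open.mem_nhds hmem)).differentiableAt (by norm_num)).hasFDerivAt
      have hc : HasDerivAt (fun x : ℝ => ((p.1, x) : ℝ × ℝ)) ((0 : ℝ), (1 : ℝ)) x :=
        (hasDerivAt_const x p.1).prodMk (hasDerivAt_id x)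
      have := hfd.comp_hasDerivAt x hc
      have hz : fderiv ℝ f (p.1, x) (0, 1) = 0 := hfx _ hmem
      rwa [hz] at this
    have hdiff : Differentiable ℝ (fun x : ℝ => f (p.1, x)) :=
      fun x => (hline x).differentiableAt
    have hder : ∀ x, deriv (fun x : ℝ => f (p.1, x)) x = 0 := fun x => (hline x).deriv
    have h2 : f p = f (p.1, q.2) := is_const_of_deriv_eq_zero hdiff hder p.2 q.2
    rw [hpq] at h2
    exact h2
  exact ⟨hconst σ hσ part2, hconst μ hμ part1⟩
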